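/- For s ≥ 2 and traffic intensity ρ = λ/(sμ) with 0 < ρ < 1, the Erlang C formula C(s, ρ) = [ (sρ）^s/s! · 1/(1−ρ) ] / [ Σ_{k=0}^{s−1} (sρ)^k/k! + (sρ)^s/s! · 1/(1−ρ) ] is strictly less than ρ^{√s}. (Harel's bound, used in eq. (13).) -/

import Mathlib

open Finset

noncomputable def harelC (s j : ℕ) : ℝ := (s.descFactorial j : ℝ) / (s : ℝ) ^ j

lemma harelC_nonneg (s j : ℕ) : 0 ≤ harelC s j := by
  unfold harelC; positivity

lemma harelC_le_one (s j : ℕ) : harelC s j ≤ 1 := by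
  unfold harelC
  rcases Nat.eq_zero_or_pos s with hs | hs
  · subst hs
    rcases j with _ | j <;> simp [Nat.descFactorial]
  · rw [div_le_one (by positivity)]
    exact_mod_cast Nat.descFactorial_le_pow s j

lemma harelC_rec (s : ℕ) (hs : 0 < s) (j : ℕ) :
    (j : ℝ) * harelC s j = s * (harelC s j - harelC s (j + 1)) := by
  unfold harelC
  rw [Nat.descFactorial_succ]
  rcases le_or_gt j s with h | h
  · have hcast : ((s - j : ℕ) : ℝ) = (s : ℝ) - j := by
      push_cast [h]; ring
    push_cast [hcast]
    have hspos : (0:ℝ) < s := by exact_mod_cast hs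
    field_simp
    ring
  · have h1 : s.descFactorial j = 0 := Nat.descFactorial_eq_zero_iff_lt.2 h
    have h2 : s - j = 0 := by omega
    simp [h1, h2]

lemma harelC_zero (s : ℕ) : harelC s 0 = 1 := by simp [harelC]

lemma harelC_one (s : ℕ) (hs : 0 < s) : harelC s 1 = 1 := by
  have : (s:ℝ) ≠ 0 := by exact_mod_cast hs.ne'
  simp [harelC, Nat.descFactorial, this]

lemma harelC_succ_top (s : ℕ) : harelC s (s + 1) = 0 := by
  simp [harelC, Nat.descFactorial_eq_zero_iff_lt.2 (Nat.lt_succ_self s)]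

lemma harelC_sumA (s : ℕ) (hs : 0 < s) :
    ∑ i ∈ range s, ((i + 1 : ℕ) : ℝ) * harelC s (i + 1) = s := by
  have h1 : ∑ j ∈ range (s + 1), ((j : ℕ) : ℝ) * harelC s j = s := by
    have h2 : ∑ j ∈ range (s + 1), ((j : ℕ) : ℝ) * harelC s j
        = ∑ j ∈ range (s + 1), (s : ℝ) * (harelC s j - harelC s (j + 1)) :=
      Finset.sum_congr rfl fun j _ => harelC_rec s hs j
    rw [h2, ← Finset.mul_sum, Finset.sum_range_sub' (fun j => harelC s j),
      harelC_zero, harelC_succ_top]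
    ring
  rw [Finset.sum_range_succ' (fun j => ((j : ℕ) : ℝ) * harelC s j) s] at h1
  simpa using h1

lemma harelC_sumB (s : ℕ) (hs : 0 < s) :
    ∑ i ∈ range s, ((i + 1 : ℕ) : ℝ) ^ 2 * harelC s (i + 1)
      = s * ∑ i ∈ range s, harelC s (i + 1) := by
  have key : ∀ j : ℕ, ((j : ℕ) : ℝ) ^ 2 * harelC s j
      = (s : ℝ) * ((j : ℝ) * harelC s j - ((j+1:ℕ):ℝ) * harelC s (j+1))
        + s * harelC s (j + 1) := by
    intro j
    have h1 := harelC_rec s hs j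
    have h2 := harelC_rec s hs (j + 1)
    push_cast at h2 ⊢
    nlinarith [h1, h2]
  have h3 : ∑ j ∈ range (s + 1), ((j : ℕ) : ℝ) ^ 2 * harelC s j
      = (s:ℝ) * ((0:ℝ) * harelC s 0 - ((s+1:ℕ):ℝ) * harelC s (s+1))
        + s * ∑ j ∈ range (s + 1), harelC s (j + 1) := by
    calc ∑ j ∈ range (s + 1), ((j : ℕ) : ℝ) ^ 2 * harelC s j
        = ∑ j ∈ range (s + 1), ((s : ℝ) * ((j : ℝ) * harelC s j - ((j+1:ℕ):ℝ) * harelC s (j+1))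
            + s * harelC s (j + 1)) := Finset.sum_congr rfl fun j _ => key j
      _ = (s:ℝ) * ∑ j ∈ range (s+1), ((j : ℝ) * harelC s j - ((j+1:ℕ):ℝ) * harelC s (j+1))
            + s * ∑ j ∈ range (s + 1), harelC s (j + 1) := by
          rw [Finset.sum_add_distrib, Finset.mul_sum, Finset.mul_sum]
      _ = _ := by
          rw [Finset.sum_range_sub' (fun j => ((j:ℕ) : ℝ) * harelC s j) (s+1)]
          norm_num
  rw [harelC_succ_top, Finset.sum_range_succ (fun j => harelC s (j+1)) s, harelC_succ_top] at h3
  rw [Finset.sum_range_succ' (fun j => ((j : ℕ) : ℝ) ^ 2 * harelC s j) s] at h3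
  simp only [mul_zero, zero_mul, sub_zero, add_zero, Nat.cast_zero, zero_pow, harelC_zero] at h3
  push_cast at h3 ⊢
  linarith [h3]

lemma harelQ_sq_gt (s : ℕ) (hs : 2 ≤ s) :
    (s : ℝ) < (∑ i ∈ range s, harelC s (i + 1)) ^ 2 := by
  have hs0 : 0 < s := by omega
  set Q : ℝ := ∑ i ∈ range s, harelC s (i + 1) with hQdef
  have hQ1 : 1 ≤ Q := by
    have := Finset.single_le_sum (f := fun i => harelC s (i + 1))
      (fun i _ => harelC_nonneg s (i + 1)) (Finset.mem_range.2 hs0)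
    simpa [harelC_one s hs0] using this
  have hQpos : 0 < Q := by linarith
  set q : ℝ := (s : ℝ) / Q with hqdef
  -- variance
  have hexp : ∀ i : ℕ, (((i+1 : ℕ):ℝ) - q) ^ 2 * harelC s (i + 1)
      = ((i+1 : ℕ):ℝ)^2 * harelC s (i+1) - 2*q*(((i+1:ℕ):ℝ) * harelC s (i+1))
        + q^2 * harelC s (i+1) := by intro i; ring
  have hV : ∑ i ∈ range s, (((i+1 : ℕ):ℝ) - q) ^ 2 * harelC s (i + 1)
      = (s:ℝ) * Q - 2*q*(s:ℝ) + q^2 * Q := by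
    calc ∑ i ∈ range s, (((i+1 : ℕ):ℝ) - q) ^ 2 * harelC s (i + 1)
        = ∑ i ∈ range s, (((i+1 : ℕ):ℝ)^2 * harelC s (i+1)
            - 2*q*(((i+1:ℕ):ℝ) * harelC s (i+1)) + q^2 * harelC s (i+1)) :=
          Finset.sum_congr rfl fun i _ => hexp i
      _ = (∑ i ∈ range s, ((i+1 : ℕ):ℝ)^2 * harelC s (i+1))
            - 2*q*(∑ i ∈ range s, ((i+1:ℕ):ℝ) * harelC s (i+1))
            + q^2 * ∑ i ∈ range s, harelC s (i+1) := by
          rw [Finset.sum_add_distrib, Finset.sum_sub_distrib, Finset.mul_sum, Finset.mul_sum]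
      _ = (s:ℝ) * Q - 2*q*(s:ℝ) + q^2 * Q := by
          rw [harelC_sumB s hs0, harelC_sumA s hs0]
  have hVpos : 0 < ∑ i ∈ range s, (((i+1 : ℕ):ℝ) - q) ^ 2 * harelC s (i + 1) := by
    have hnn : ∀ i ∈ range s, 0 ≤ (((i+1 : ℕ):ℝ) - q) ^ 2 * harelC s (i + 1) :=
      fun i _ => mul_nonneg (sq_nonneg _) (harelC_nonneg s _)
    by_cases hq1 : q = 1
    · have h1mem : (1 : ℕ) ∈ range s := Finset.mem_range.2 (by omega)
      have hterm : 0 < (((1+1 : ℕ):ℝ) - q) ^ 2 * harelC s (1 + 1) := by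
        have hc2 : 0 < harelC s 2 := by
          unfold harelC
          have : 0 < s.descFactorial 2 := Nat.pos_of_ne_zero (by rw [Ne, Nat.descFactorial_eq_zero_iff_lt]; omega)
          positivity
        rw [hq1]
        norm_num
        exact hc2
      calc (0:ℝ) < _ := hterm
        _ ≤ _ := Finset.single_le_sum hnn h1mem
    · have h0mem : (0 : ℕ) ∈ range s := Finset.mem_range.2 (by omega)
      have hterm : 0 < (((0+1 : ℕ):ℝ) - q) ^ 2 * harelC s (0 + 1) := by
        rw [harelC_one s hs0]
        have : ((0+1 : ℕ):ℝ) - q ≠ 0 := by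
          push_cast
          intro h
          exact hq1 (by linarith)
        positivity
      calc (0:ℝ) < _ := hterm
        _ ≤ _ := Finset.single_le_sum hnn h0mem
  rw [hV] at hVpos
  have hq : q * Q = s := by
    rw [hqdef]; exact div_mul_cancel₀ _ hQpos.ne'
  have hspos : (0:ℝ) < s := by exact_mod_cast hs0
  nlinarith [hVpos, hq, hQpos, hspos]

lemma harel_geom (ρ σ : ℝ) (hρσ : ρ * σ = 1) (n : ℕ) :
    1 + (1 - ρ) * ∑ i ∈ range n, σ ^ (i + 1) = σ ^ n := by
  have h : ∀ i : ℕ, (1 - ρ) * σ ^ (i + 1) = σ ^ (i + 1) - σ ^ i := by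
    intro i
    have : ρ * σ ^ (i+1) = σ ^ i := by
      rw [pow_succ]
      calc ρ * (σ ^ i * σ) = (ρ * σ) * σ ^ i := by ring
        _ = σ ^ i := by rw [hρσ]; ring
    nlinarith [this]
  rw [Finset.mul_sum, Finset.sum_congr rfl (fun i _ => h i),
    Finset.sum_range_sub (fun i => σ ^ i) n]
  simp

lemma harel_main (s : ℕ) (hs : 2 ≤ s) (ρ : ℝ) (h0 : 0 < ρ) (h1 : ρ < 1) :
    (((s:ℝ) * ρ) ^ s / (Nat.factorial s) * (1 / (1 - ρ))) /
        ((∑ k ∈ Finset.range s, ((s:ℝ) * ρ) ^ k / (Nat.factorial k)) +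
          ((s:ℝ) * ρ) ^ s / (Nat.factorial s) * (1 / (1 - ρ)))
      < ρ ^ (Real.sqrt s) := by
  have hs0 : 0 < s := by omega
  have hspos : (0:ℝ) < s := by exact_mod_cast hs0
  set a : ℝ := (s:ℝ) * ρ with ha
  have hapos : 0 < a := by positivity
  set σ : ℝ := ρ⁻¹ with hσ
  have hσpos : 0 < σ := by positivity
  have hσ1 : 1 < σ := (one_lt_inv_iff₀ ).2 ⟨h0, h1⟩
  have hρσ : ρ * σ = 1 := mul_inv_cancel₀ h0.ne'
  have h1ρ : 0 < 1 - ρ := by linarith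
  set t : ℝ := Real.sqrt s with htdef
  have ht1 : 1 < t := by
    rw [htdef, show (1:ℝ) = Real.sqrt 1 by simp]
    exact Real.sqrt_lt_sqrt (by norm_num) (by exact_mod_cast hs)
  have hts : t ≤ s := by
    rw [htdef]
    have hs2 : (2:ℝ) ≤ s := by exact_mod_cast hs
    calc Real.sqrt s ≤ Real.sqrt ((s:ℝ)^2) := Real.sqrt_le_sqrt (by nlinarith)
      _ = s := Real.sqrt_sq hspos.le
  -- ceiling
  have htM : t ≤ (⌈t⌉₊:ℝ) := Nat.le_ceil t
  have hM2 : 2 ≤ ⌈t⌉₊ := Nat.lt_ceil.2 (by exact_mod_cast ht1)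
  have hMs : ⌈t⌉₊ ≤ s := Nat.ceil_le.2 (by exact_mod_cast hts)
  have hMlt : (⌈t⌉₊ : ℝ) < t + 1 := Nat.ceil_lt_add_one (le_of_lt (lt_trans one_pos ht1))
  obtain ⟨m, hm⟩ : ∃ m, ⌈t⌉₊ = m + 1 := ⟨⌈t⌉₊ - 1, by omega⟩
  rw [hm] at htM hMs hMlt hM2
  have hm1 : 1 ≤ m := by omega
  have hmt : (m : ℝ) < t := by
    push_cast at hMlt ⊢
    linarith
  set θ : ℝ := t - (m:ℝ) with hθdef
  have hθ0 : 0 < θ := by simp [hθdef]; linarith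
  have hθ1 : θ ≤ 1 := by
    have : t ≤ (m:ℝ) + 1 := by push_cast at htM; linarith
    simp [hθdef]; linarith
  -- convexity : σ ^ t ≤ (1-θ) σ^m + θ σ^(m+1)
  have hconv : σ ^ t ≤ (1 - θ) * σ ^ m + θ * σ ^ (m + 1) := by
    have hcx := convexOn_exp.2 (Set.mem_univ ((m:ℝ) * Real.log σ))
      (Set.mem_univ (((m:ℝ)+1) * Real.log σ)) (by linarith : (0:ℝ) ≤ 1 - θ) hθ0.le
      (by ring)
    have he1 : Real.exp ((m:ℝ) * Real.log σ) = σ ^ m := by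
      rw [Real.exp_nat_mul, Real.exp_log hσpos]
    have he2 : Real.exp (((m:ℝ)+1) * Real.log σ) = σ ^ (m+1) := by
      rw [show ((m:ℝ)+1) = ((m+1:ℕ):ℝ) by push_cast; ring,
        Real.exp_nat_mul, Real.exp_log hσpos]
    have he3 : (1-θ) • ((m:ℝ) * Real.log σ) + θ • (((m:ℝ)+1) * Real.log σ)
        = t * Real.log σ := by
      simp only [smul_eq_mul]
      rw [hθdef]; ring
    rw [he3, he1, he2, smul_eq_mul, smul_eq_mul] at hcx
    rwa [Real.rpow_def_of_pos hσpos, mul_comm]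
  -- majorization
  set Q : ℝ := ∑ i ∈ range s, harelC s (i + 1) with hQdef
  have hQt : t < Q := by
    have hsq := harelQ_sq_gt s hs
    have hQpos : 0 < Q := by
      have h0mem : (0:ℕ) ∈ range s := Finset.mem_range.2 hs0
      have := Finset.single_le_sum (f := fun i => harelC s (i + 1))
        (fun i _ => harelC_nonneg s (i + 1)) h0mem
      simp only [harelC_one s hs0] at this
      rw [hQdef]; linarith
    have h' : Real.sqrt s < Q := (Real.sqrt_lt' hQpos).2 hsq
    rwa [htdef]
  -- the d function
  set d : ℕ → ℝ := fun i => if i < m then 1 else if i = m then θ else 0 with hd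
  have hd_sum : ∑ i ∈ range s, d i = (m:ℝ) + θ - 1 + 1 := by
    have hsub : range (m+1) ⊆ range s := by
      apply Finset.range_subset_range.2; omega
    rw [← Finset.sum_subset hsub (fun x _ hx => by
      have : ¬ x < m ∧ x ≠ m := by
        constructor <;> [skip; skip] <;>
        · simp only [Finset.mem_range] at hx; omega
      simp [hd, this.1, this.2])]
    rw [Finset.sum_range_succ]
    have : ∀ i ∈ range m, d i = 1 := fun i hi => by
      simp [hd, Finset.mem_range.1 hi]
    rw [Finset.sum_congr rfl this]
    simp [hd]
  have hdσ : ∑ i ∈ range s, d i * σ ^ (i+1)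
      = (∑ i ∈ range m, σ ^ (i+1)) + θ * σ ^ (m+1) := by
    have hsub : range (m+1) ⊆ range s := by
      apply Finset.range_subset_range.2; omega
    rw [← Finset.sum_subset hsub (fun x _ hx => by
      have : ¬ x < m ∧ x ≠ m := by
        constructor <;> [skip; skip] <;>
        · simp only [Finset.mem_range] at hx; omega
      simp [hd, this.1, this.2])]
    rw [Finset.sum_range_succ]
    have : ∀ i ∈ range m, d i * σ ^ (i+1) = σ ^ (i+1) := fun i hi => by
      simp [hd, Finset.mem_range.1 hi]
    rw [Finset.sum_congr rfl this]
    simp [hd]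
  have hpoint : ∀ i ∈ range s,
      0 ≤ (harelC s (i+1) - d i) * (σ ^ (i+1) - σ ^ (m+1)) := by
    intro i _
    rcases lt_trichotomy i m with hlt | heq | hgt
    · have hc : harelC s (i+1) - d i ≤ 0 := by
        simp only [hd, if_pos hlt]
        linarith [harelC_le_one s (i+1)]
      have hσle : σ ^ (i+1) - σ ^ (m+1) ≤ 0 := by
        have := pow_le_pow_right₀ hσ1.le (by omega : i + 1 ≤ m + 1)
        linarith
      nlinarith [hc, hσle]
    · subst heq; simp
    · have hc : 0 ≤ harelC s (i+1) - d i := by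
        have h1 : ¬ i < m := by omega
        have h2 : i ≠ m := by omega
        simp only [hd, if_neg h1, if_neg h2]
        simpa using harelC_nonneg s (i+1)
      have hσge : 0 ≤ σ ^ (i+1) - σ ^ (m+1) := by
        have := pow_le_pow_right₀ hσ1.le (by omega : m + 1 ≤ i + 1)
        linarith
      exact mul_nonneg hc hσge
  have hmaj : ∑ i ∈ range s, d i * σ ^ (i+1) < ∑ i ∈ range s, harelC s (i+1) * σ ^ (i+1) := by
    have hsplit : ∀ i : ℕ, harelC s (i+1) * σ ^ (i+1) - d i * σ ^ (i+1)
        = (harelC s (i+1) - d i) * (σ ^ (i+1) - σ ^ (m+1))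
          + σ ^ (m+1) * (harelC s (i+1) - d i) := by intro i; ring
    have h4 : ∑ i ∈ range s, (harelC s (i+1) * σ ^ (i+1) - d i * σ ^ (i+1))
        = ∑ i ∈ range s, (harelC s (i+1) - d i) * (σ ^ (i+1) - σ ^ (m+1))
          + σ ^ (m+1) * (Q - ((m:ℝ) + θ - 1 + 1)) := by
      rw [Finset.sum_congr rfl (fun i _ => hsplit i), Finset.sum_add_distrib,
        ← Finset.mul_sum, Finset.sum_sub_distrib, ← hQdef, hd_sum]
    have h5 : 0 ≤ ∑ i ∈ range s, (harelC s (i+1) - d i) * (σ ^ (i+1) - σ ^ (m+1)) :=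
      Finset.sum_nonneg hpoint
    have h6 : 0 < σ ^ (m+1) * (Q - ((m:ℝ) + θ - 1 + 1)) := by
      apply mul_pos (by positivity)
      have : (m:ℝ) + θ = t := by rw [hθdef]; ring
      linarith
    have h7 : 0 < ∑ i ∈ range s, (harelC s (i+1) * σ ^ (i+1) - d i * σ ^ (i+1)) := by
      rw [h4]; linarith
    rw [Finset.sum_sub_distrib] at h7
    linarith
  -- chain: σ ^ t < 1 + (1-ρ) Σ c σ
  have hchain : σ ^ t < 1 + (1 - ρ) * ∑ i ∈ range s, harelC s (i+1) * σ ^ (i+1) := by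
    have hg := harel_geom ρ σ hρσ m
    have e1 : (1 - θ) * σ ^ m + θ * σ ^ (m + 1)
        = 1 + (1 - ρ) * ((∑ i ∈ range m, σ ^ (i+1)) + θ * σ ^ (m+1)) := by
      have : (1 - ρ) * σ ^ (m+1) = σ ^ (m+1) - σ ^ m := by
        have h' : ρ * σ ^ (m+1) = σ ^ m := by
          rw [pow_succ]
          calc ρ * (σ ^ m * σ) = (ρ * σ) * σ ^ m := by ring
            _ = σ ^ m := by rw [hρσ]; ring
        linear_combination -h'
      linear_combination -hg - θ * this
    calc σ ^ t ≤ (1 - θ) * σ ^ m + θ * σ ^ (m + 1) := hconv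
      _ = 1 + (1 - ρ) * ((∑ i ∈ range m, σ ^ (i+1)) + θ * σ ^ (m+1)) := e1
      _ = 1 + (1 - ρ) * ∑ i ∈ range s, d i * σ ^ (i+1) := by rw [hdσ]
      _ < 1 + (1 - ρ) * ∑ i ∈ range s, harelC s (i+1) * σ ^ (i+1) := by
          have := mul_lt_mul_of_pos_left hmaj h1ρ
          linarith
  -- relate sums to S
  set U : ℝ := a ^ s / (Nat.factorial s : ℝ) with hU
  have hUpos : 0 < U := by
    have := Nat.factorial_pos s
    rw [hU]; positivity
  have hterm : ∀ i ∈ range s,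
      U * (harelC s (i+1) * σ ^ (i+1)) = a ^ (s - 1 - i) / (Nat.factorial (s - 1 - i) : ℝ) := by
    intro i hi
    have hi' : i + 1 ≤ s := Finset.mem_range.1 hi
    have hfact : ((s - (i+1)).factorial : ℝ) * (s.descFactorial (i+1) : ℝ) = (s.factorial : ℝ) := by
      exact_mod_cast congrArg (Nat.cast (R := ℝ)) (Nat.factorial_mul_descFactorial hi')
    have hsub : s - 1 - i = s - (i + 1) := by omega
    have hapow : a ^ (s - (i+1)) * a ^ (i+1) = a ^ s := by
      rw [← pow_add]; congr 1; omega
    have haj : a ^ (i+1) = (s:ℝ) ^ (i+1) * ρ ^ (i+1) := by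
      rw [ha, mul_pow]
    have hσj : σ ^ (i+1) = (ρ ^ (i+1))⁻¹ := by
      rw [hσ, inv_pow]
    rw [hsub]
    unfold harelC
    rw [hσj, hU]
    have hρj : (0:ℝ) < ρ ^ (i+1) := by positivity
    have hsj : (0:ℝ) < (s:ℝ) ^ (i+1) := by positivity
    have hfac1 : (0:ℝ) < ((s - (i+1)).factorial : ℝ) := by
      exact_mod_cast Nat.factorial_pos _
    have hfac2 : (0:ℝ) < (s.factorial : ℝ) := by
      exact_mod_cast Nat.factorial_pos _
    have hstep : a ^ s / (s.factorial:ℝ) * ((s.descFactorial (i+1) : ℝ) / (s:ℝ) ^ (i+1) * (ρ ^ (i+1))⁻¹)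
        = (a ^ s * (s.descFactorial (i+1) : ℝ)) / ((s.factorial:ℝ) * ((s:ℝ) ^ (i+1) * ρ ^ (i+1))) := by
      field_simp
    rw [hstep, ← haj, div_eq_div_iff (by positivity) hfac1.ne', ← hapow, ← hfact]
    ring
  have hS : ∑ k ∈ range s, a ^ k / (Nat.factorial k : ℝ)
      = U * ∑ i ∈ range s, harelC s (i+1) * σ ^ (i+1) := by
    rw [Finset.mul_sum, Finset.sum_congr rfl hterm]
    exact (Finset.sum_range_reflect (fun k => a ^ k / (Nat.factorial k : ℝ)) s).symm
  -- final assembly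
  set S : ℝ := ∑ k ∈ range s, a ^ k / (Nat.factorial k : ℝ) with hSdef
  set T : ℝ := a ^ s / (Nat.factorial s : ℝ) * (1 / (1 - ρ)) with hT
  have hTpos : 0 < T := by
    rw [hT]
    exact mul_pos (by positivity) (one_div_pos.2 h1ρ)
  have hSpos : 0 < S := by
    rw [hSdef]
    exact Finset.sum_pos (fun k _ => div_pos (pow_pos hapos k)
      (by exact_mod_cast Nat.factorial_pos k)) ⟨0, Finset.mem_range.2 hs0⟩
  have hTU : T * (1 - ρ) = U := by
    rw [hT, hU]; field_simp
  have hST : T * σ ^ t < S + T := by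
    have h8 : T * (σ ^ t) < T * (1 + (1 - ρ) * ∑ i ∈ range s, harelC s (i+1) * σ ^ (i+1)) :=
      mul_lt_mul_of_pos_left hchain hTpos
    have h9 : T * (1 + (1 - ρ) * ∑ i ∈ range s, harelC s (i+1) * σ ^ (i+1))
        = T + U * ∑ i ∈ range s, harelC s (i+1) * σ ^ (i+1) := by
      rw [← hTU]; ring
    rw [h9, ← hS] at h8
    linarith
  have hρt : (0:ℝ) < ρ ^ t := Real.rpow_pos_of_pos h0 t
  have hσρ : σ ^ t = (ρ ^ t)⁻¹ := by
    rw [hσ]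
    exact Real.inv_rpow h0.le t
  have hSTpos : 0 < S + T := by linarith
  rw [div_lt_iff₀ hSTpos]
  have h10 : ρ ^ t * (T * σ ^ t) < ρ ^ t * (S + T) := mul_lt_mul_of_pos_left hST hρt
  have h11 : ρ ^ t * (T * σ ^ t) = T := by
    rw [hσρ]
    field_simp
  linarith

/-- Harel's bound: the Erlang C formula is strictly less than ρ^{√s} for s ≥ 2. -/
theorem erlangC_lt_rpow_sqrt (s : ℕ) (hs : 2 ≤ s) (μ lam : ℝ) (hμ : 0 < μ)
    (hlam : 0 < lam) (hlt : lam < s * μ) :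
    let ρ : ℝ := lam / (s * μ)
    ((s * ρ) ^ s / (Nat.factorial s) * (1 / (1 - ρ))) /
        ((∑ k ∈ Finset.range s, (s * ρ) ^ k / (Nat.factorial k)) +
          (s * ρ) ^ s / (Nat.factorial s) * (1 / (1 - ρ)))
      < ρ ^ (Real.sqrt s) := by
  intro ρ
  have hs0 : (0:ℝ) < s := by
    have : 0 < s := by omega
    exact_mod_cast this
  have hsμ : (0:ℝ) < (s:ℝ) * μ := mul_pos hs0 hμ
  have h0 : 0 < ρ := div_pos hlam hsμ
  have h1 : ρ < 1 := (div_lt_one hsμ).2 hlt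
  exact harel_main s hs ρ h0 h1
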